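/- Let L be a Moufang loop, T ≤ L a subgroup generated by a set S, and u ∈ L with ((g₁g₂)u)² = 1 for all g₁,g₂ ∈ S ∪ {e}. Then for any finite sequence s_{i₁},…,s_{i_k} of elements of S, one has u(s_{i₁}⋯s_{i_k}) = s_{i₁}⁻¹(u(s_{i₂}⋯s_{i_k})). -/
import Mathlib


/-- A Moufang loop: a loop (a quasigroup with two-sided identity) satisfying the
Moufang identities (m1) `z(x(yx)) = ((zx)y)x`, (m2) `x(y(xz)) = ((xy)x)z`,
(m3) `(xy)(zx) = x((yz)x)`. -/
class MoufangLoop (L : Type*) extends Mul L, One L where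
  one_mul : ∀ a : L, 1 * a = a
  mul_one : ∀ a : L, a * 1 = a
  left_bij : ∀ a : L, Function.Bijective fun x : L => a * x
  right_bij : ∀ a : L, Function.Bijective fun x : L => x * a
  m1 : ∀ x y z : L, z * (x * (y * x)) = ((z * x) * y) * x
  m2 : ∀ x y z : L, x * (y * (x * z)) = ((x * y) * x) * z
  m3 : ∀ x y z : L, (x * y) * (z * x) = x * ((y * z) * x)

section MoufangBasics

variable {L : Type*} [MoufangLoop L]

theorem ml_left_cancel {a b c : L} (h : a * b = a * c) : b = c :=
  (MoufangLoop.left_bij a).1 h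

theorem ml_right_cancel {a b c : L} (h : b * a = c * a) : b = c :=
  (MoufangLoop.right_bij a).1 h

noncomputable def minv (a : L) : L := ((MoufangLoop.left_bij a).2 1).choose

theorem mul_minv (a : L) : a * minv a = 1 :=
  ((MoufangLoop.left_bij a).2 1).choose_spec

theorem ml_lip (a z : L) : minv a * (a * z) = z := by
  apply ml_left_cancel (a := a)
  have h := MoufangLoop.m2 a (minv a) z
  rwa [mul_minv, MoufangLoop.one_mul] at h

theorem minv_mul (a : L) : minv a * a = 1 := by
  have h := ml_lip a 1
  rwa [MoufangLoop.mul_one] at h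

theorem ml_rip (a z : L) : (z * a) * minv a = z := by
  apply ml_right_cancel (a := a)
  have h := MoufangLoop.m1 a (minv a) z
  rw [minv_mul, MoufangLoop.mul_one] at h
  exact h.symm

theorem minv_unique {a b : L} (h : a * b = 1) : b = minv a :=
  ml_left_cancel (h.trans (mul_minv a).symm)

theorem minv_unique' {a b : L} (h : b * a = 1) : b = minv a := by
  have h2 := ml_rip a b
  rw [h, MoufangLoop.one_mul] at h2
  exact h2.symm

theorem minv_minv (a : L) : minv (minv a) = a :=
  (minv_unique' (mul_minv a)).symm

theorem minv_mul_rev (x y : L) : minv (x * y) = minv y * minv x := by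
  have h1 : minv x * (x * y) = y := ml_lip x y
  have h2 : y * minv (x * y) = minv x := by
    have h := ml_rip (x * y) (minv x)
    rwa [h1] at h
  have h3 := ml_lip y (minv (x * y))
  rw [h2] at h3
  exact h3.symm

end MoufangBasics

/-- The subset `T` of the Moufang loop `L`, together with the inversion map `inv`,
forms a subgroup of `L`: it contains the identity, is closed under multiplication
and inversion, multiplication restricted to `T` is associative, and `inv` provides
two-sided inverses in `T`. -/
structure IsSubgroupOfLoop {L : Type*} [MoufangLoop L] (T : Set L) (inv : L → L) : Prop where
  one_mem : (1 : L) ∈ T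
  mul_mem : ∀ a ∈ T, ∀ b ∈ T, a * b ∈ T
  inv_mem : ∀ a ∈ T, inv a ∈ T
  assoc : ∀ a ∈ T, ∀ b ∈ T, ∀ c ∈ T, (a * b) * c = a * (b * c)
  mul_inv : ∀ a ∈ T, a * inv a = 1
  inv_mul : ∀ a ∈ T, inv a * a = 1

/-- `T` is generated (as a group) by the subset `S`: every element of `T` is an
iterated product of elements of `S` and their inverses. -/
def GeneratedBy {L : Type*} [MoufangLoop L] (T : Set L) (inv : L → L) (S : Set L) : Prop :=
  S ⊆ T ∧ ∀ w ∈ T, ∃ l : List L,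
    (∀ x ∈ l, x ∈ S ∨ ∃ s ∈ S, x = inv s) ∧ w = l.foldr (· * ·) 1

/-- Lemma 2.4: if `L` is a Moufang loop, `T ≤ L` a subgroup generated by `S`, and
`u ∈ L` satisfies `((g₁g₂)u)² = 1` for all `g₁, g₂ ∈ S ∪ {e}`, then for any finite
sequence `s_{i₁}, …, s_{i_k}` of elements of `S` one has
`u(s_{i₁} ⋯ s_{i_k}) = s_{i₁}⁻¹ (u (s_{i₂} ⋯ s_{i_k}))`. -/
theorem weak_c2 {L : Type*} [MoufangLoop L]
    (T : Set L) (inv : L → L) (S : Set L) (u : L)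
    (hT : IsSubgroupOfLoop T inv) (hgen : GeneratedBy T inv S)
    (hu : ∀ g₁ ∈ insert (1 : L) S, ∀ g₂ ∈ insert (1 : L) S,
      ((g₁ * g₂) * u) * ((g₁ * g₂) * u) = 1) :
    ∀ s ∈ S, ∀ l : List L, (∀ x ∈ l, x ∈ S) →
      u * ((s :: l).foldr (· * ·) 1) = inv s * (u * (l.foldr (· * ·) 1)) := by
  intro s hs l _
  have hsS : s ∈ insert (1 : L) S := Set.mem_insert_iff.2 (Or.inr hs)
  have h1 : (1 : L) ∈ insert (1 : L) S := Set.mem_insert _ _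
  have huu : u * u = 1 := by
    have h := hu 1 h1 1 h1
    rwa [MoufangLoop.one_mul, MoufangLoop.one_mul] at h
  have hsu : (s * u) * (s * u) = 1 := by
    have h := hu s hsS 1 h1
    rwa [MoufangLoop.mul_one] at h
  have hinvu : minv u = u := (minv_unique huu).symm
  have h2 : s * u = u * minv s := by
    have e1 : minv (s * u) = s * u := (minv_unique hsu).symm
    rw [minv_mul_rev, hinvu] at e1
    exact e1.symm
  have h3 : (s * u) * s = u := by
    have h := ml_rip (minv s) u
    rw [minv_minv] at h
    rw [h2]
    exact h
  have hinvs : inv s = minv s := minv_unique (hT.mul_inv s (hgen.1 hs))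
  set W := l.foldr (· * ·) 1 with hW
  have hfold : (s :: l).foldr (· * ·) 1 = s * W := rfl
  rw [hfold, hinvs]
  apply ml_left_cancel (a := s)
  have lhs : s * (u * (s * W)) = u * W := by
    rw [MoufangLoop.m2, h3]
  have rhs : s * (minv s * (u * W)) = u * W := by
    have h := ml_lip (minv s) (u * W)
    rwa [minv_minv] at h
  rw [lhs, rhs]
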